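/- Let φ ∈ Γ₀(ℝ) be even and supercoercive with dom φ = ℝ, set f = φ ∘ ‖·‖ on a real Hilbert space H, and suppose x = 0 and η − δ·φ*(0) > 0 with the perspective value φ̃(0, max{η,0}) > δ. Then the projection of (0,η,δ) onto epi f̃ equals (0, (η − δ φ*(0))/(1 + φ*(0)²), φ*(0)(δ φ*(0) − η)/(1 + φ*(0)²)). -/

import Mathlib

open scoped Classical
open Filter Set Topology

noncomputable section

/-- `f` is proper, convex and lower semicontinuous (the class `Γ₀`). -/
def Gamma0 {E : Type*} [NormedAddCommGroup E] [NormedSpace ℝ E] (f : E → EReal) : Prop :=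
  (∃ x, f x ≠ ⊤) ∧ (∀ x, f x ≠ ⊥) ∧
  (∀ x y : E, ∀ a b : ℝ, 0 ≤ a → 0 ≤ b → a + b = 1 →
    f (a • x + b • y) ≤ (a : EReal) * f x + (b : EReal) * f y) ∧
  LowerSemicontinuous f

/-- recession function of `f` with base point `x0 ∈ dom f`:
`(rec f)(x) = lim_{t→∞} (f(x0+tx)-f(x0))/t`, which by convexity equals the supremum. -/
def recFn {E : Type*} [NormedAddCommGroup E] [NormedSpace ℝ E]
    (f : E → EReal) (x0 : E) (x : E) : EReal :=
  ⨆ t ∈ Set.Ioi (0 : ℝ), (f (x0 + t • x) - f x0) * ((t⁻¹ : ℝ) : EReal)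

/-- the perspective function of `f` (recession with base point `x0 ∈ dom f`). -/
def persp {E : Type*} [NormedAddCommGroup E] [NormedSpace ℝ E]
    (f : E → EReal) (x0 : E) (p : E × ℝ) : EReal :=
  if 0 < p.2 then (p.2 : EReal) * f (p.2⁻¹ • p.1)
  else if p.2 = 0 then recFn f x0 p.1 else ⊤

/-- Fenchel conjugate. -/
def conj {E : Type*} [NormedAddCommGroup E] [InnerProductSpace ℝ E]
    (f : E → EReal) (u : E) : EReal :=
  ⨆ x, ((inner ℝ x u : ℝ) : EReal) - f x

/-- Fenchel conjugate on `ℝ`. -/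
def conjR (f : ℝ → EReal) (u : ℝ) : EReal := ⨆ x : ℝ, ((x * u : ℝ) : EReal) - f x

/-- Fenchel conjugate on `E × ℝ` (with the Hilbert direct sum inner product). -/
def conj2 {E : Type*} [NormedAddCommGroup E] [InnerProductSpace ℝ E]
    (g : E × ℝ → EReal) (q : E × ℝ) : EReal :=
  ⨆ p : E × ℝ, (((inner ℝ p.1 q.1 : ℝ) + p.2 * q.2 : ℝ) : EReal) - g p

/-- indicator function of a set. -/
def indE {E : Type*} (C : Set E) (x : E) : EReal := if x ∈ C then 0 else ⊤

/-- support function of a set. -/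
def suppFn {E : Type*} [NormedAddCommGroup E] [InnerProductSpace ℝ E]
    (C : Set E) (x : E) : EReal := ⨆ u ∈ C, ((inner ℝ u x : ℝ) : EReal)

/-- epigraph of an extended-real-valued function. -/
def epi {E : Type*} (f : E → EReal) : Set (E × ℝ) := {p | f p.1 ≤ (p.2 : EReal)}

/-- epigraph of the perspective of `f`, as a subset of `E × ℝ × ℝ`. -/
def epiPersp {E : Type*} [NormedAddCommGroup E] [NormedSpace ℝ E]
    (f : E → EReal) (x0 : E) : Set (E × ℝ × ℝ) :=
  {p | persp f x0 (p.1, p.2.1) ≤ (p.2.2 : EReal)}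

/-- `p` is the metric projection of `z` onto `C ⊆ E`. -/
def IsProjE {E : Type*} [NormedAddCommGroup E] (C : Set E) (z p : E) : Prop :=
  p ∈ C ∧ ∀ q ∈ C, ‖z - p‖ ≤ ‖z - q‖

/-- `p` is the metric projection of `z` onto `C ⊆ E ⊕ ℝ` (Hilbert direct sum distance). -/
def IsProj2 {E : Type*} [NormedAddCommGroup E] (C : Set (E × ℝ)) (z p : E × ℝ) : Prop :=
  p ∈ C ∧ ∀ q ∈ C,
    ‖z.1 - p.1‖ ^ 2 + (z.2 - p.2) ^ 2 ≤ ‖z.1 - q.1‖ ^ 2 + (z.2 - q.2) ^ 2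

/-- `p` is the metric projection of `z` onto `C ⊆ E ⊕ ℝ ⊕ ℝ` (Hilbert direct sum distance). -/
def IsProj3 {E : Type*} [NormedAddCommGroup E] (C : Set (E × ℝ × ℝ)) (z p : E × ℝ × ℝ) : Prop :=
  p ∈ C ∧ ∀ q ∈ C,
    ‖z.1 - p.1‖ ^ 2 + (z.2.1 - p.2.1) ^ 2 + (z.2.2 - p.2.2) ^ 2 ≤
      ‖z.1 - q.1‖ ^ 2 + (z.2.1 - q.2.1) ^ 2 + (z.2.2 - q.2.2) ^ 2

/-- `p = prox_{γ g}(z)` on `E`. -/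
def IsProxE {E : Type*} [NormedAddCommGroup E] (g : E → EReal) (γ : ℝ) (z p : E) : Prop :=
  ∀ y, g p + ((‖z - p‖ ^ 2 / (2 * γ) : ℝ) : EReal) ≤ g y + ((‖z - y‖ ^ 2 / (2 * γ) : ℝ) : EReal)

/-- `p = prox_{γ g}(z)` on `E ⊕ ℝ` (Hilbert direct sum distance). -/
def IsProx2 {E : Type*} [NormedAddCommGroup E] (g : E × ℝ → EReal) (γ : ℝ)
    (z p : E × ℝ) : Prop :=
  ∀ y, g p + (((‖z.1 - p.1‖ ^ 2 + (z.2 - p.2) ^ 2) / (2 * γ) : ℝ) : EReal) ≤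
    g y + (((‖z.1 - y.1‖ ^ 2 + (z.2 - y.2) ^ 2) / (2 * γ) : ℝ) : EReal)

/-- subdifferential of `f` at `x`. -/
def subdiff {E : Type*} [NormedAddCommGroup E] [InnerProductSpace ℝ E]
    (f : E → EReal) (x : E) : Set E :=
  {u | ∀ y, ((inner ℝ (y - x) u : ℝ) : EReal) + f x ≤ f y}

theorem stmt11 {H : Type*} [NormedAddCommGroup H] [InnerProductSpace ℝ H] [CompleteSpace H]
    (φ : ℝ → EReal) (hφ : Gamma0 φ) (heven : ∀ x, φ (-x) = φ x)
    (hdom : ∀ x, φ x ≠ ⊤)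
    (hsc : Tendsto (fun x : ℝ => (φ x).toReal / |x|) (cocompact ℝ) atTop)
    (η δ : ℝ) (c : ℝ) (hc : conjR φ 0 = (c : EReal))
    (hcond : 0 < η - δ * c)
    (hval : (δ : EReal) < persp φ 0 (0, max η 0)) :
    IsProj3 (epiPersp (fun x : H => φ ‖x‖) 0) ((0 : H), η, δ)
      ((0 : H), (η - δ * c) / (1 + c ^ 2), c * (δ * c - η) / (1 + c ^ 2)) := by

  classical
  obtain ⟨-, hbot, hconv, -⟩ := hφ
  have hne : ∀ x, φ x = (((φ x).toReal : ℝ) : EReal) := fun x =>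
    (EReal.coe_toReal (hdom x) (hbot x)).symm
  set r : ℝ → ℝ := fun x => (φ x).toReal with hr
  have hrdef : ∀ x, r x = (φ x).toReal := fun _ => rfl
  -- φ attains its minimum at 0
  have hmin : ∀ x : ℝ, r 0 ≤ r x := by
    intro x
    have h := hconv x (-x) (1/2) (1/2) (by norm_num) (by norm_num) (by norm_num)
    have hx0 : (1/2 : ℝ) • x + (1/2 : ℝ) • (-x) = 0 := by
      rw [smul_eq_mul, smul_eq_mul]; ring
    rw [hx0, heven] at h
    rw [hne x, hne 0] at h
    have h2 : (((1/2 : ℝ) : EReal) * (((φ x).toReal : ℝ) : EReal)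
        + ((1/2 : ℝ) : EReal) * (((φ x).toReal : ℝ) : EReal))
        = (((1/2 * (φ x).toReal + 1/2 * (φ x).toReal : ℝ)) : EReal) := by norm_cast
    rw [h2] at h
    have := EReal.coe_le_coe_iff.mp h
    simp only [hrdef]
    linarith
  -- c = - r 0
  have hle1 : -c ≤ r 0 := by
    have h := le_iSup (fun x : ℝ => ((x * 0 : ℝ) : EReal) - φ x) 0
    rw [← conjR] at h
    rw [hc, hne 0] at h
    have h2 : ((0 * 0 : ℝ) : EReal) - (((φ 0).toReal : ℝ) : EReal)
        = (((0 * 0 - (φ 0).toReal : ℝ)) : EReal) := by norm_cast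
    rw [h2] at h
    have := EReal.coe_le_coe_iff.mp h
    simp only [hrdef]
    linarith
  have hle2 : c ≤ -(r 0) := by
    have h : conjR φ 0 ≤ (((-(r 0) : ℝ)) : EReal) := by
      refine iSup_le fun x => ?_
      rw [hne x, ← EReal.coe_sub]
      exact EReal.coe_le_coe_iff.mpr (by have := hmin x; simp only [hrdef] at this ⊢; linarith)
    rw [hc] at h
    exact EReal.coe_le_coe_iff.mp h
  have hr0 : r 0 = -c := le_antisymm (by linarith) (by linarith)
  have hr0' : (φ 0).toReal = -c := hr0
  -- c * η + δ < 0
  have hkey : c * η + δ < 0 := by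
    rcases le_or_gt η 0 with hη | hη
    · have hmax : max η 0 = 0 := max_eq_right hη
      rw [hmax] at hval
      have hrec : recFn φ 0 (0 : ℝ) = 0 := by
        refine le_antisymm (iSup₂_le fun t ht => ?_) ?_
        · have h0 : (0 : ℝ) + t • (0 : ℝ) = 0 := by simp
          rw [h0, hne 0, ← EReal.coe_sub, sub_self, EReal.coe_zero, zero_mul]
        · refine le_iSup₂_of_le 1 (by norm_num) ?_
          have h0 : (0 : ℝ) + (1 : ℝ) • (0 : ℝ) = 0 := by simp
          rw [h0, hne 0, ← EReal.coe_sub, sub_self, EReal.coe_zero, zero_mul]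
      have hp : persp φ 0 ((0 : ℝ), (0 : ℝ)) = 0 := by
        rw [persp]; simp [hrec]
      rw [hp] at hval
      have hδ : δ < 0 := by exact_mod_cast hval
      nlinarith [hcond]
    · have hmax : max η 0 = η := max_eq_left hη.le
      rw [hmax] at hval
      have hp : persp φ 0 ((0 : ℝ), η) = ((η * (φ 0).toReal : ℝ) : EReal) := by
        rw [persp]
        simp only [hη, if_pos]
        have h0 : η⁻¹ • (0 : ℝ) = 0 := by simp
        rw [h0]
        conv_lhs => rw [hne 0]
        rw [← EReal.coe_mul]
      rw [hp] at hval
      have hlt : δ < η * (φ 0).toReal := by exact_mod_cast hval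
      rw [hr0'] at hlt
      nlinarith
  have hL : (0 : ℝ) < 1 + c ^ 2 := by positivity
  have hα : (0 : ℝ) < (η - δ * c) / (1 + c ^ 2) := by positivity
  constructor
  · -- membership
    show persp (fun x : H => φ ‖x‖) 0 (((0 : H), (η - δ * c) / (1 + c ^ 2)) : H × ℝ) ≤ _
    rw [persp]
    simp only [hα, if_pos]
    have h0 : ((η - δ * c) / (1 + c ^ 2))⁻¹ • (0 : H) = 0 := by simp
    rw [h0, norm_zero, hne 0, ← EReal.coe_mul]
    refine EReal.coe_le_coe_iff.mpr ?_
    rw [hr0']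
    apply le_of_eq
    field_simp
    ring
  · -- optimality
    rintro ⟨y, μ, ν⟩ hq
    have hq' : persp (fun x : H => φ ‖x‖) 0 ((y, μ) : H × ℝ) ≤ ((ν : ℝ) : EReal) := hq
    have hcons : 0 ≤ μ ∧ 0 ≤ c * μ + ν := by
      rcases lt_trichotomy μ 0 with hμ | hμ | hμ
      · exfalso
        have hp : persp (fun x : H => φ ‖x‖) 0 ((y, μ) : H × ℝ) = ⊤ := by
          rw [persp, if_neg (not_lt.mpr hμ.le), if_neg hμ.ne]
        rw [hp] at hq'
        exact absurd (top_le_iff.mp hq') (EReal.coe_ne_top ν)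
      · subst hμ
        have hp : persp (fun x : H => φ ‖x‖) 0 ((y, (0:ℝ)) : H × ℝ)
            = recFn (fun x : H => φ ‖x‖) 0 y := by
          rw [persp, if_neg (lt_irrefl (0:ℝ)), if_pos rfl]
        rw [hp] at hq'
        have hrec : (0 : EReal) ≤ recFn (fun x : H => φ ‖x‖) 0 y := by
          refine le_iSup₂_of_le 1 (by norm_num) ?_
          show (0:EReal) ≤ (φ ‖(0:H) + (1:ℝ) • y‖ - φ ‖(0:H)‖) * (((1:ℝ)⁻¹ : ℝ) : EReal)
          have h2 : ((0:H) + (1:ℝ) • y) = y := by simp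
          rw [h2, norm_zero, hne ‖y‖, hne 0, ← EReal.coe_sub]
          have h3 : (((1 : ℝ)⁻¹ : ℝ) : EReal) = (1 : EReal) := by norm_num
          rw [h3, mul_one]
          have := hmin ‖y‖
          simp only [hrdef] at this
          exact_mod_cast sub_nonneg.mpr this
        have hν : (0 : ℝ) ≤ ν := by exact_mod_cast le_trans hrec hq'
        exact ⟨le_refl 0, by linarith⟩
      · have hp : persp (fun x : H => φ ‖x‖) 0 ((y, μ) : H × ℝ)
            = ((μ * (φ ‖μ⁻¹ • y‖).toReal : ℝ) : EReal) := by
          rw [persp, if_pos hμ]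
          conv_lhs => rw [hne ‖μ⁻¹ • y‖]
          rw [← EReal.coe_mul]
        rw [hp] at hq'
        have h1 : μ * (φ ‖μ⁻¹ • y‖).toReal ≤ ν := EReal.coe_le_coe_iff.mp hq'
        have h2 : r 0 ≤ r ‖μ⁻¹ • y‖ := hmin _
        rw [hr0] at h2
        simp only [hrdef] at h2
        have h3 : μ * (-c) ≤ μ * (φ ‖μ⁻¹ • y‖).toReal :=
          mul_le_mul_of_nonneg_left h2 hμ.le
        exact ⟨hμ.le, by nlinarith⟩
    obtain ⟨hμ0, hcμν⟩ := hcons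
    have keyq : (c * η + δ) ^ 2 ≤ (1 + c ^ 2) * ((η - μ) ^ 2 + (δ - ν) ^ 2) := by
      nlinarith [sq_nonneg ((μ - η) - c * (ν - δ)), mul_nonneg hcμν (neg_nonneg.mpr hkey.le),
        sq_nonneg (c * μ + ν)]
    show ‖(0:H) - (0:H)‖ ^ 2 + (η - (η - δ * c) / (1 + c ^ 2)) ^ 2
        + (δ - c * (δ * c - η) / (1 + c ^ 2)) ^ 2
      ≤ ‖(0:H) - y‖ ^ 2 + (η - μ) ^ 2 + (δ - ν) ^ 2
    have lhs_eq : (η - (η - δ * c) / (1 + c ^ 2)) ^ 2 + (δ - c * (δ * c - η) / (1 + c ^ 2)) ^ 2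
        = (c * η + δ) ^ 2 / (1 + c ^ 2) := by
      field_simp
      ring
    rw [sub_self, norm_zero, zero_sub, norm_neg]
    have hy2 : (0 : ℝ) ≤ ‖y‖ ^ 2 := sq_nonneg _
    have hdiv : (c * η + δ) ^ 2 / (1 + c ^ 2) ≤ (η - μ) ^ 2 + (δ - ν) ^ 2 := by
      rw [div_le_iff₀ hL]
      nlinarith [keyq]
    nlinarith [hdiv, hy2, lhs_eq]
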